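/- Tensoring over R with a weight module preserves short exact sequences of weight modules: if 0 → M → S → N → 0 is a short exact sequence of weight R-modules (each a direct sum of weight spaces over maximal ideals, with all weight spaces finite-dimensional over the residue fields) and M' is another weight R-module, then 0 → M ⊗_R M' → S ⊗_R M' → N ⊗_R M' → 0 is exact. -/

import Mathlib

open scoped TensorProduct DirectSum

/-- The weight space of an `R`-module at an ideal `I`: the elements killed by `I`. -/
def weightSpace (R : Type*) [CommRing R] (M : Type*) [AddCommGroup M] [Module R M]
    (I : Ideal R) : Submodule R M where
  carrier := {v | ∀ r ∈ I, r • v = 0}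
  add_mem' := by
    intro a b ha hb r hr
    rw [smul_add, ha r hr, hb r hr, add_zero]
  zero_mem' := by intro r hr; simp
  smul_mem' := by
    intro c v hv r hr
    rw [smul_comm, hv r hr, smul_zero]

/-- In a module killed by a maximal ideal, every submodule has a complement. -/
theorem weight_exists_isCompl {R : Type*} [CommRing R] (m : Ideal R) [m.IsMaximal]
    {V : Type*} [AddCommGroup V] [Module R V] (hV : ∀ r ∈ m, ∀ v : V, r • v = 0)
    (U : Submodule R V) : ∃ C : Submodule R V, U ⊓ C = ⊥ ∧ U ⊔ C = ⊤ := by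
  have htor : Module.IsTorsionBySet R V (m : Set R) := fun x a => hV a a.2 x
  letI := htor.module
  letI := Ideal.Quotient.field m
  let U' : Submodule (R ⧸ m) V :=
    { carrier := (U : Set V)
      add_mem' := fun ha hb => U.add_mem ha hb
      zero_mem' := U.zero_mem
      smul_mem' := by rintro ⟨b⟩ x hx; exact U.smul_mem b hx }
  obtain ⟨C', hC'⟩ := U'.exists_isCompl
  let C : Submodule R V :=
    { carrier := (C' : Set V)
      add_mem' := fun ha hb => C'.add_mem ha hb
      zero_mem' := C'.zero_mem
      smul_mem' := fun r x hx => C'.smul_mem (Ideal.Quotient.mk m r) hx }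
  refine ⟨C, ?_, ?_⟩
  · rw [eq_bot_iff]
    intro x hx
    have h1 : x ∈ U' := hx.1
    have h2 : x ∈ C' := hx.2
    have := Submodule.disjoint_def.mp hC'.disjoint x h1 h2
    simpa using this
  · rw [eq_top_iff]
    intro x _
    have hx : x ∈ U' ⊔ C' := by
      rw [codisjoint_iff.mp hC'.codisjoint]; trivial
    obtain ⟨y, hy, z, hz, h⟩ := Submodule.mem_sup.mp hx
    exact Submodule.mem_sup.mpr ⟨y, hy, z, hz, h⟩

/-- An injective map of weight modules splits. -/
theorem weight_exists_retraction {R : Type*} [CommRing R]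
    {M S : Type*} [AddCommGroup M] [Module R M] [AddCommGroup S] [Module R S]
    [DecidableEq (MaximalSpectrum R)]
    (hM : DirectSum.IsInternal (fun m : MaximalSpectrum R => weightSpace R M m.asIdeal))
    (hS : DirectSum.IsInternal (fun m : MaximalSpectrum R => weightSpace R S m.asIdeal))
    (f : M →ₗ[R] S) (hf : Function.Injective f) :
    ∃ r : S →ₗ[R] M, r ∘ₗ f = LinearMap.id := by
  classical
  set Sfam := fun m : MaximalSpectrum R => weightSpace R S m.asIdeal with hSfam
  set W := LinearMap.range f with hW
  -- f maps weight spaces to weight spaces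
  have hmap : ∀ m : MaximalSpectrum R,
      (weightSpace R M m.asIdeal).map f ≤ W ⊓ Sfam m := by
    intro m
    rintro _ ⟨v, hv, rfl⟩
    refine ⟨LinearMap.mem_range_self f v, ?_⟩
    intro r hr
    rw [← map_smul, hv r hr, map_zero]
  -- W is contained in the sup of its weight pieces
  have hWle : W ≤ ⨆ m : MaximalSpectrum R, (W ⊓ Sfam m) := by
    have : W = ⨆ m : MaximalSpectrum R, (weightSpace R M m.asIdeal).map f := by
      rw [hW, LinearMap.range_eq_map, ← hM.submodule_iSup_eq_top, Submodule.map_iSup]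
    exact le_trans (le_of_eq this) (iSup_mono fun m => hmap m)
  -- choose complements in each weight space
  have hcompl : ∀ m : MaximalSpectrum R, ∃ C : Submodule R S,
      C ≤ Sfam m ∧ (W ⊓ Sfam m) ⊓ C = ⊥ ∧ (W ⊓ Sfam m) ⊔ C = Sfam m := by
    intro m
    have hV : ∀ r ∈ m.asIdeal, ∀ v : (Sfam m), r • v = 0 := by
      intro r hr v
      ext
      exact v.2 r hr
    obtain ⟨C₀, hC₀b, hC₀t⟩ := weight_exists_isCompl m.asIdeal hV
      ((W ⊓ Sfam m).comap (Sfam m).subtype)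
    refine ⟨C₀.map (Sfam m).subtype, Submodule.map_subtype_le _ _, ?_, ?_⟩
    · rw [eq_bot_iff]
      rintro x ⟨hxW, y, hy, rfl⟩
      have : y ∈ ((W ⊓ Sfam m).comap (Sfam m).subtype) ⊓ C₀ := ⟨by simpa using hxW, hy⟩
      rw [hC₀b] at this
      have hy0 : y = 0 := by simpa using this
      simp [hy0]
    · apply le_antisymm
      · exact sup_le inf_le_right (Submodule.map_subtype_le _ _)
      · intro x hx
        have hx' : (⟨x, hx⟩ : Sfam m) ∈ (⊤ : Submodule R (Sfam m)) := trivial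
        rw [← hC₀t] at hx'
        obtain ⟨y, hy, z, hz, h⟩ := Submodule.mem_sup.mp hx'
        refine Submodule.mem_sup.mpr ⟨y, hy, z, ⟨z, hz, rfl⟩, ?_⟩
        have := congrArg (Subtype.val) h
        simpa using this
  choose C hCle hCbot hCtop using hcompl
  set D := ⨆ m : MaximalSpectrum R, C m with hD
  -- the decomposition equivalence and projections
  let e : (⨁ (m : MaximalSpectrum R), Sfam m) ≃ₗ[R] S :=
    LinearEquiv.ofBijective (DirectSum.coeLinearMap Sfam) hS
  let π : MaximalSpectrum R → (S →ₗ[R] S) := fun m =>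
    (Sfam m).subtype ∘ₗ (DirectSum.component R (MaximalSpectrum R) (fun m => Sfam m) m)
      ∘ₗ (e.symm : S →ₗ[R] _)
  have hπ_same : ∀ (m : MaximalSpectrum R) (x : S), x ∈ Sfam m → π m x = x := by
    intro m x hx
    have := hS.ofBijective_coeLinearMap_of_mem (i := m) hx
    simp only [π, LinearMap.coe_comp, Function.comp_apply, LinearEquiv.coe_coe]
    erw [this]
    rfl
  have hπ_ne : ∀ (m m' : MaximalSpectrum R) (x : S), x ∈ Sfam m' → m' ≠ m → π m x = 0 := by
    intro m m' x hx hne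
    have := hS.ofBijective_coeLinearMap_of_mem_ne (i := m') (j := m) hne hx
    simp only [π, LinearMap.coe_comp, Function.comp_apply, LinearEquiv.coe_coe]
    erw [this]
    rfl
  -- π m maps sups of weight-compatible families into the m-th member
  have hπ_sup : ∀ (T : MaximalSpectrum R → Submodule R S),
      (∀ m', T m' ≤ Sfam m') → ∀ (m : MaximalSpectrum R) (x : S),
      x ∈ (⨆ m', T m') → π m x ∈ T m := by
    intro T hT m x hx
    refine Submodule.iSup_induction (motive := fun x => π m x ∈ T m) T hx ?_ ?_ ?_
    · intro m' y hy
      by_cases h : m' = m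
      · subst h
        rw [hπ_same m' y (hT m' hy)]
        exact hy
      · rw [hπ_ne m m' y (hT m' hy) h]
        exact (T m).zero_mem
    · simp only [map_zero]
      exact (T m).zero_mem
    · intro y z hy hz
      rw [map_add]
      exact (T m).add_mem hy hz
  -- x = 0 if all projections vanish
  have hπ_zero : ∀ x : S, (∀ m, π m x = 0) → x = 0 := by
    intro x hx
    have : e.symm x = 0 := by
      refine DirectSum.ext_component R fun m => ?_
      have := hx m
      simp only [π, LinearMap.coe_comp, Function.comp_apply, LinearEquiv.coe_coe,
        Submodule.coe_subtype] at this
      ext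
      simpa using this
    have := congrArg e this
    simpa using this
  -- IsCompl W D
  have hWD : IsCompl W D := by
    constructor
    · rw [disjoint_iff]
      rw [eq_bot_iff]
      intro x hx
      have hxW : x ∈ ⨆ m, (W ⊓ Sfam m) := hWle hx.1
      have hxD : x ∈ ⨆ m, C m := hx.2
      have hzero : ∀ m, π m x = 0 := by
        intro m
        have h1 : π m x ∈ W ⊓ Sfam m :=
          hπ_sup _ (fun m' => inf_le_right) m x hxW
        have h2 : π m x ∈ C m := hπ_sup _ hCle m x hxD
        have : π m x ∈ (W ⊓ Sfam m) ⊓ C m := ⟨h1, h2⟩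
        rw [hCbot m] at this
        simpa using this
      simp [hπ_zero x hzero]
    · rw [codisjoint_iff, eq_top_iff, ← hS.submodule_iSup_eq_top]
      refine iSup_le fun m => ?_
      rw [← hCtop m]
      exact sup_le (le_trans inf_le_left le_sup_left)
        (le_trans (le_iSup C m) le_sup_right)
  exact ⟨LinearMap.linearProjOfIsCompl D f hf hWD,
    LinearMap.ext fun x => LinearMap.linearProjOfIsCompl_apply_left D f hf hWD x⟩

/-- Tensoring with a weight module preserves short exact sequences of weight
modules: if `M, S, N, M'` are weight `R`-modules (direct sums of their weight
spaces over maximal ideals, with all weight spaces finite-dimensional over the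
residue fields) and `0 → M → S → N → 0` is exact, then
`0 → M ⊗[R] M' → S ⊗[R] M' → N ⊗[R] M' → 0` is exact. -/
theorem stmt5 {R : Type*} [CommRing R]
    {M S N M' : Type*}
    [AddCommGroup M] [Module R M] [AddCommGroup S] [Module R S]
    [AddCommGroup N] [Module R N] [AddCommGroup M'] [Module R M']
    [DecidableEq (MaximalSpectrum R)]
    (hM : DirectSum.IsInternal (fun m : MaximalSpectrum R => weightSpace R M m.asIdeal))
    (hS : DirectSum.IsInternal (fun m : MaximalSpectrum R => weightSpace R S m.asIdeal))
    (hN : DirectSum.IsInternal (fun m : MaximalSpectrum R => weightSpace R N m.asIdeal))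
    (hM' : DirectSum.IsInternal (fun m : MaximalSpectrum R => weightSpace R M' m.asIdeal))
    (hMfin : ∀ m : MaximalSpectrum R, Module.Finite R (weightSpace R M m.asIdeal))
    (hSfin : ∀ m : MaximalSpectrum R, Module.Finite R (weightSpace R S m.asIdeal))
    (hNfin : ∀ m : MaximalSpectrum R, Module.Finite R (weightSpace R N m.asIdeal))
    (hM'fin : ∀ m : MaximalSpectrum R, Module.Finite R (weightSpace R M' m.asIdeal))
    (f : M →ₗ[R] S) (g : S →ₗ[R] N)
    (hf : Function.Injective f) (hg : Function.Surjective g)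
    (hfg : LinearMap.range f = LinearMap.ker g) :
    Function.Injective (f.rTensor M') ∧ Function.Surjective (g.rTensor M') ∧
      LinearMap.range (f.rTensor M') = LinearMap.ker (g.rTensor M') := by
  obtain ⟨r, hr⟩ := weight_exists_retraction hM hS f hf
  refine ⟨?_, LinearMap.rTensor_surjective M' hg, ?_⟩
  · have : (r.rTensor M').comp (f.rTensor M') = LinearMap.id := by
      rw [← LinearMap.rTensor_comp, hr, LinearMap.rTensor_id]
    intro x y h
    have h2 := congrArg (r.rTensor M') h
    rwa [← LinearMap.comp_apply, ← LinearMap.comp_apply, this,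
      LinearMap.id_apply, LinearMap.id_apply] at h2
  · have hexact : Function.Exact f g := LinearMap.exact_iff.mpr hfg.symm
    have := rTensor_exact (R := R) M' hexact hg
    exact (LinearMap.exact_iff.mp this).symm
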